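/- Let Δ be a finite simplicial complex on vertex set S. Then the Boolean cell complex Γ(Δ) of all injective words over S with content in Δ is partitionable: it admits a partition into pairwise disjoint intervals [σ_i, τ_i] in the subword order such that each τ_i is a maximal cell of Γ(Δ). -/

import Mathlib

open List

namespace GammaPart

set_option linter.unusedSectionVars false

variable {S : Type*} [DecidableEq S]

/-! ### basic list lemmas -/

theorem split_eq {y : S} : ∀ {a₀ b₀ a₁ b₁ : List S}, a₀ ++ y :: b₀ = a₁ ++ y :: b₁ →
    y ∉ a₀ → y ∉ a₁ → a₀ = a₁ ∧ b₀ = b₁ := by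
  intro a₀
  induction a₀ with
  | nil =>
    intro b₀ a₁ b₁ h _ hy1
    cases a₁ with
    | nil => simpa using h
    | cons c a₁' =>
      simp only [nil_append, cons_append, cons.injEq] at h
      exact absurd (h.1 ▸ mem_cons_self) hy1
  | cons c a₀' ih =>
    intro b₀ a₁ b₁ h hy0 hy1
    cases a₁ with
    | nil =>
      simp only [cons_append, nil_append, cons.injEq] at h
      exact absurd (h.1 ▸ mem_cons_self) hy0
    | cons d a₁' =>
      simp only [cons_append, cons.injEq] at h
      obtain ⟨h1, h2⟩ := h
      have := ih h2 (fun hh => hy0 (mem_cons_of_mem _ hh)) (fun hh => hy1 (mem_cons_of_mem _ hh))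
      exact ⟨by rw [h1, this.1], this.2⟩

theorem sublist_split {y : S} {a b α β : List S} (hya : y ∉ a) (hyα : y ∉ α) (hyβ : y ∉ β) :
    (a ++ y :: b) <+ (α ++ y :: β) ↔ a <+ α ∧ b <+ β := by
  constructor
  · intro h
    rw [sublist_append_iff] at h
    obtain ⟨l₁, l₂, heq, h₁, h₂⟩ := h
    have hyl₁ : y ∉ l₁ := fun hh => hyα (h₁.subset hh)
    rw [sublist_cons_iff] at h₂
    rcases h₂ with h₂ | ⟨r, hr, hrs⟩
    · have : y ∈ l₂ := by
        by_contra hy2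
        have : y ∈ a ++ y :: b := by simp
        rw [heq] at this
        rcases mem_append.1 this with h | h
        exacts [hyl₁ h, hy2 h]
      exact absurd (h₂.subset this) hyβ
    · subst hr
      obtain ⟨h1, h2⟩ := split_eq heq hya hyl₁
      exact ⟨h1 ▸ h₁, h2 ▸ hrs⟩
  · rintro ⟨h₁, h₂⟩
    exact h₁.append (h₂.cons₂ y)

theorem sublist_append_single {y : S} {v α : List S} (h : v <+ α ++ [y]) (hy : y ∉ v) :
    v <+ α := by
  rw [sublist_append_iff] at h
  obtain ⟨l₁, l₂, heq, h₁, h₂⟩ := h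
  have : l₂ = [] := by
    cases h₂ with
    | cons _ h => simpa using h
    | cons_cons _ h =>
      exfalso; apply hy; rw [heq]; simp
  subst this; simpa [heq] using h₁

theorem sublist_append_single_mem {y : S} {a b α : List S} (h : (a ++ y :: b) <+ α ++ [y])
    (hya : y ∉ a) (hyα : y ∉ α) : b = [] ∧ a <+ α := by
  have : (a ++ y :: b) <+ (α ++ y :: []) := by simpa using h
  rw [sublist_split hya hyα (by simp)] at this
  exact ⟨sublist_nil.1 this.2, this.1⟩

/-- unique subword with given content -/
theorem filter_mem_of_sublist {u τ : List S} (h : u <+ τ) (hτ : τ.Nodup) :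
    τ.filter (· ∈ u) = u := by
  induction h with
  | slnil => simp
  | @cons l₁ l₂ a h ih =>
    have hnd : l₂.Nodup := (nodup_cons.1 hτ).2
    have ha : a ∉ l₂ := (nodup_cons.1 hτ).1
    have hau : a ∉ l₁ := fun hh => ha (h.subset hh)
    rw [filter_cons_of_neg (by simpa using hau)]
    exact ih hnd
  | @cons_cons l₁ l₂ a h ih =>
    have hnd : l₂.Nodup := (nodup_cons.1 hτ).2
    have ha : a ∉ l₂ := (nodup_cons.1 hτ).1
    rw [filter_cons_of_pos (by simp)]
    congr 1
    rw [filter_congr (fun x hx => ?_), ih hnd]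
    have : x ≠ a := fun hh => ha (hh ▸ hx)
    simp [this]

theorem sublist_eq_of_toFinset_eq {u u' τ : List S} (h : u <+ τ) (h' : u' <+ τ)
    (hτ : τ.Nodup) (he : u.toFinset = u'.toFinset) : u = u' := by
  have h1 := filter_mem_of_sublist h hτ
  have h2 := filter_mem_of_sublist h' hτ
  rw [← h1, ← h2]
  apply filter_congr
  intro x _
  have : x ∈ u ↔ x ∈ u' := by
    rw [← mem_toFinset, ← mem_toFinset (l := u'), he]
  simp [this]

theorem interval_iff {τ w : List S} (A : Finset S) (hτ : τ.Nodup) (hA : A ⊆ τ.toFinset) :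
    ((τ.filter (· ∈ A)) <+ w ∧ w <+ τ) ↔ (w <+ τ ∧ A ⊆ w.toFinset) := by
  have hctn : (τ.filter (· ∈ A)).toFinset = A := by
    ext x
    simp only [toFinset_filter, Finset.mem_filter, decide_eq_true_eq]
    exact ⟨fun h => h.2, fun h => ⟨hA h, h⟩⟩
  constructor
  · rintro ⟨h₁, h₂⟩
    refine ⟨h₂, ?_⟩
    rw [← hctn]
    intro x hx
    simp only [mem_toFinset] at hx ⊢
    exact h₁.subset hx
  · rintro ⟨h₂, hAw⟩
    refine ⟨?_, h₂⟩
    have h3 : w.filter (· ∈ A) <+ w := filter_sublist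
    have h4 : w.filter (· ∈ A) <+ τ := h3.trans h₂
    have h5 : (w.filter (· ∈ A)).toFinset = A := by
      ext x
      simp only [toFinset_filter, Finset.mem_filter, decide_eq_true_eq]
      exact ⟨fun h => h.2, fun h => ⟨hAw h, h⟩⟩
    rw [sublist_eq_of_toFinset_eq filter_sublist h4 hτ (by rw [hctn, h5])]
    exact h3

/-! ### Forall₂ helpers -/

theorem forall₂_append_iff_len {α β : Type*} {R : α → β → Prop} :
    ∀ {l₁ : List α} {m₁ : List β} {l₂ : List α} {m₂ : List β}, l₁.length = m₁.length →
      (Forall₂ R (l₁ ++ l₂) (m₁ ++ m₂) ↔ Forall₂ R l₁ m₁ ∧ Forall₂ R l₂ m₂) := by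
  intro l₁
  induction l₁ with
  | nil => intro m₁ l₂ m₂ h; cases m₁ with
    | nil => simp
    | cons => simp at h
  | cons a l₁' ih =>
    intro m₁ l₂ m₂ h
    cases m₁ with
    | nil => simp at h
    | cons b m₁' =>
      simp only [cons_append, forall₂_cons, length_cons] at h ⊢
      rw [ih (by omega)]
      tauto

theorem forall₂_decomp_middle {α β : Type*} {R : α → β → Prop} :
    ∀ {l₁ : List α} {v : α} {l₂ : List α} {M : List β}, Forall₂ R (l₁ ++ v :: l₂) M →
      ∃ m₁ w m₂, M = m₁ ++ w :: m₂ ∧ m₁.length = l₁.length ∧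
        Forall₂ R l₁ m₁ ∧ R v w ∧ Forall₂ R l₂ m₂ := by
  intro l₁
  induction l₁ with
  | nil =>
    intro v l₂ M h
    cases M with
    | nil => cases h
    | cons w m₂ =>
      rw [nil_append, forall₂_cons] at h
      exact ⟨[], w, m₂, by simp, by simp, Forall₂.nil, h.1, h.2⟩
  | cons a l₁' ih =>
    intro v l₂ M h
    cases M with
    | nil => rw [cons_append] at h; cases h
    | cons b M' =>
      rw [cons_append, forall₂_cons] at h
      obtain ⟨m₁, w, m₂, he, hl, h1, h2, h3⟩ := ih h.2
      exact ⟨b :: m₁, w, m₂, by simp [he], by simp [hl], forall₂_cons.2 ⟨h.1, h1⟩, h2, h3⟩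

theorem forall₂_rel_of_mem {α β : Type*} {R : α → β → Prop} :
    ∀ {l : List α} {m : List β}, Forall₂ R l m → ∀ {v}, v ∈ l → ∃ w ∈ m, R v w := by
  intro l
  induction l with
  | nil => intro m h v hv; simp at hv
  | cons a l' ih =>
    intro m h v hv
    cases m with
    | nil => cases h
    | cons b m' =>
      rw [forall₂_cons] at h
      rcases mem_cons.1 hv with rfl | hv'
      · exact ⟨b, mem_cons_self, h.1⟩
      · obtain ⟨w, hw, hr⟩ := ih h.2 hv'
        exact ⟨w, mem_cons_of_mem _ hw, hr⟩

/-! ### decomposition lemmas -/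

theorem exists_decomp_two {α : Type*} : ∀ (j : ℕ) (l : List α), j + 2 ≤ l.length →
    ∃ hi b a lo, l = hi ++ b :: a :: lo ∧ hi.length = j := by
  intro j
  induction j with
  | zero =>
    intro l hl
    match l, hl with
    | b :: a :: lo, _ => exact ⟨[], b, a, lo, rfl, rfl⟩
  | succ n ih =>
    intro l hl
    match l, hl with
    | c :: l', hl =>
      obtain ⟨hi, b, a, lo, he, hlen⟩ := ih l' (by simp at hl; omega)
      exact ⟨c :: hi, b, a, lo, by simp [he], by simp [hlen]⟩

theorem slot_unique {y : S} : ∀ {X₁ : List (List S)} {u X₂ Y₁ w Y₂},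
    (X₁ ++ u :: X₂).flatten.Nodup → X₁ ++ u :: X₂ = Y₁ ++ w :: Y₂ → y ∈ u → y ∈ w →
    X₁ = Y₁ ∧ u = w ∧ X₂ = Y₂ := by
  intro X₁
  induction X₁ with
  | nil =>
    intro u X₂ Y₁ w Y₂ hnd he hyu hyw
    cases Y₁ with
    | nil =>
      simp only [nil_append] at he
      injection he with h1 h2
      exact ⟨rfl, h1, h2⟩
    | cons c Y₁' =>
      exfalso
      simp only [nil_append, cons_append, cons.injEq] at he
      have hw : w ∈ X₂ := by rw [he.2]; exact mem_append_right _ (mem_cons_self)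
      have hyfl : y ∈ X₂.flatten := mem_flatten.2 ⟨w, hw, hyw⟩
      simp only [nil_append, flatten_cons, nodup_append'] at hnd
      exact hnd.2.2 (he.1 ▸ hyu) hyfl
  | cons c X₁' ih =>
    intro u X₂ Y₁ w Y₂ hnd he hyu hyw
    cases Y₁ with
    | nil =>
      exfalso
      simp only [cons_append, nil_append, cons.injEq] at he
      have hu : u ∈ X₁' ++ u :: X₂ := mem_append_right _ (mem_cons_self)
      have : y ∈ (X₁' ++ u :: X₂).flatten := mem_flatten.2 ⟨u, hu, hyu⟩
      rw [cons_append, flatten_cons, nodup_append'] at hnd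
      exact hnd.2.2 (he.1.symm ▸ hyw) this
    | cons d Y₁' =>
      simp only [cons_append, cons.injEq] at he
      have hnd' : (X₁' ++ u :: X₂).flatten.Nodup := by
        rw [cons_append, flatten_cons, nodup_append] at hnd
        exact hnd.2.1
      obtain ⟨h1, h2, h3⟩ := ih hnd' he.2 hyu hyw
      exact ⟨by rw [he.1, h1], h2, h3⟩

/-! ### requirement predicate -/

def Rq : List (Set (Finset S)) → List (List S) → Prop
  | U :: Us, v :: vs => (v :: vs).flatten.toFinset ∈ U ∧ ¬(v = [] ∧ Rq Us vs)
  | _, _ => False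

@[simp] theorem Rq_nil_left (t : List (List S)) : ¬ Rq [] t := by cases t <;> simp [Rq]

@[simp] theorem Rq_nil_right (Us : List (Set (Finset S))) : ¬ Rq Us [] := by
  cases Us <;> simp [Rq]

theorem Rq_cons {U : Set (Finset S)} {Us : List (Set (Finset S))} {v : List S}
    {vs : List (List S)} :
    Rq (U :: Us) (v :: vs) ↔ (v :: vs).flatten.toFinset ∈ U ∧ ¬(v = [] ∧ Rq Us vs) :=
  Iff.rfl

theorem Rq_pads (n : ℕ) (t : List (List S)) : ¬ Rq (List.replicate (n+1) (∅ : Set (Finset S))) t := by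
  cases t with
  | nil => simp
  | cons v vs => rw [replicate_succ]; simp [Rq]

/-- restriction of an upset to `D` -/
def res (D : Finset S) (U : Set (Finset S)) : Set (Finset S) := {G | G ∈ U ∧ G ⊆ D}

/-- link/quotient of an upset at `y` -/
def quo (D : Finset S) (y : S) (U : Set (Finset S)) : Set (Finset S) :=
  {G | G ⊆ D ∧ insert y G ∈ U}

theorem Rq_res (D : Finset S) : ∀ (Us : List (Set (Finset S))) (t : List (List S)),
    t.flatten.toFinset ⊆ D → (Rq Us t ↔ Rq (Us.map (res D)) t) := by
  intro Us
  induction Us with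
  | nil => intro t _; simp
  | cons U Us' ih =>
    intro t hsub
    cases t with
    | nil => simp
    | cons v vs =>
      have hv : (v :: vs).flatten.toFinset ⊆ D := hsub
      have hvs : vs.flatten.toFinset ⊆ D := by
        intro x hx
        apply hv
        simp only [flatten_cons, toFinset_append, Finset.mem_union] at hx ⊢
        exact Or.inr hx
      rw [map_cons, Rq_cons, Rq_cons, ← ih vs hvs]
      constructor
      · rintro ⟨h1, h2⟩; exact ⟨⟨h1, hv⟩, h2⟩
      · rintro ⟨h1, h2⟩; exact ⟨h1.1, h2⟩



def upsetIn (E : Finset S) (U : Set (Finset S)) : Prop :=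
  ∀ G ∈ U, G ⊆ E ∧ ∀ G', G ⊆ G' → G' ⊆ E → G' ∈ U

/-! ### the surgery permutation -/

theorem perm_surg (y : S) : ∀ (thi : List (List S)) (a b : List S) (tlo : List (List S)),
    (thi ++ (a ++ y :: b) :: tlo).flatten ~ y :: (thi ++ b :: a :: tlo).flatten := by
  intro thi
  induction thi with
  | nil =>
    intro a b tlo
    simp only [nil_append, flatten_cons]
    calc (a ++ y :: b) ++ tlo.flatten ~ (y :: (a ++ b)) ++ tlo.flatten := by
            exact Perm.append_right _ perm_middle
      _ = y :: ((a ++ b) ++ tlo.flatten) := by simp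
      _ ~ y :: ((b ++ a) ++ tlo.flatten) :=
            Perm.cons y (Perm.append_right _ perm_append_comm)
      _ = y :: (b ++ (a ++ tlo.flatten)) := by simp
      _ = y :: (b :: a :: tlo).flatten := by simp
  | cons c thi' ih =>
    intro a b tlo
    simp only [cons_append, flatten_cons]
    calc c ++ (thi' ++ (a ++ y :: b) :: tlo).flatten
        ~ c ++ (y :: (thi' ++ b :: a :: tlo).flatten) := Perm.append_left c (ih a b tlo)
      _ ~ y :: (c ++ (thi' ++ b :: a :: tlo).flatten) := perm_middle

theorem ctn_split {y : S} (thi : List (List S)) (a b : List S) (tlo : List (List S)) :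
    (thi ++ (a ++ y :: b) :: tlo).flatten.toFinset
      = insert y ((thi ++ b :: a :: tlo).flatten.toFinset) := by
  have := List.toFinset_eq_of_perm _ _ (perm_surg y thi a b tlo)
  simpa using this

theorem surg_nodup {y : S} {thi tlo : List (List S)} {a b : List S}
    (h : (thi ++ (a ++ y :: b) :: tlo).flatten.Nodup) :
    (thi ++ b :: a :: tlo).flatten.Nodup ∧ y ∉ (thi ++ b :: a :: tlo).flatten := by
  have := (perm_surg y thi a b tlo).nodup_iff.1 h
  exact ⟨(nodup_cons.1 this).2, (nodup_cons.1 this).1⟩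

/-! ### Claim A : splitting identity away from the head slot -/

theorem claimA {D : Finset S} {y : S} :
    ∀ (Vs : List (Set (Finset S))) (thi : List (List S)), Vs.length = thi.length →
    ∀ (U : Set (Finset S)) (Ws : List (Set (Finset S))) (a b : List S) (tlo : List (List S)),
      (thi ++ b :: a :: tlo).flatten.toFinset ⊆ D →
      (Rq (Vs ++ U :: Ws) (thi ++ (a ++ y :: b) :: tlo) ↔
        Rq (((Vs ++ [U]).map (quo D y)) ++ List.replicate (tlo.length + 1) ∅)
          (thi ++ b :: a :: tlo)) := by
  intro Vs
  induction Vs with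
  | nil =>
    intro thi hlen U Ws a b tlo hsub
    have hthi : thi = [] := by
      cases thi with
      | nil => rfl
      | cons => simp at hlen
    subst hthi
    simp only [nil_append, map_cons, map_nil, cons_append, nil_append]
    rw [Rq_cons, Rq_cons]
    have hane : a ++ y :: b ≠ [] := by simp
    have hpads := Rq_pads (S := S) tlo.length (a :: tlo)
    have hc : ((a ++ y :: b) :: tlo).flatten.toFinset
        = insert y ((b :: a :: tlo).flatten.toFinset) := ctn_split [] a b tlo
    constructor
    · rintro ⟨h1, _⟩
      refine ⟨⟨by simpa using hsub, ?_⟩, ?_⟩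
      · rw [← hc]; exact h1
      · rintro ⟨_, hp⟩; exact hpads hp
    · rintro ⟨⟨hsub', hins⟩, _⟩
      refine ⟨by rw [hc]; exact hins, ?_⟩
      rintro ⟨hh, _⟩; exact hane hh
  | cons V Vs' ih =>
    intro thi hlen U Ws a b tlo hsub
    cases thi with
    | nil => simp at hlen
    | cons th thi' =>
      have hlen' : Vs'.length = thi'.length := by simpa using hlen
      have hsub' : (thi' ++ b :: a :: tlo).flatten.toFinset ⊆ D := by
        intro x hx
        apply hsub
        simp only [cons_append, flatten_cons, toFinset_append, Finset.mem_union] at hx ⊢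
        exact Or.inr hx
      have hcsub : ((th :: thi') ++ b :: a :: tlo).flatten.toFinset ⊆ D := hsub
      simp only [cons_append, map_cons]
      rw [Rq_cons, Rq_cons]
      have hc : ((thi' ++ (a ++ y :: b) :: tlo).flatten).toFinset
          = insert y ((thi' ++ b :: a :: tlo).flatten.toFinset) := ctn_split thi' a b tlo
      have hch : (th :: (thi' ++ (a ++ y :: b) :: tlo)).flatten.toFinset
          = insert y ((th :: (thi' ++ b :: a :: tlo)).flatten.toFinset) := ctn_split (th :: thi') a b tlo
      constructor
      · rintro ⟨h1, h2⟩
        refine ⟨⟨?_, ?_⟩, ?_⟩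
        · intro x hx; exact hcsub hx
        · rw [← hch]; exact h1
        · rintro ⟨hth, hp⟩
          exact h2 ⟨hth, (ih thi' hlen' U Ws a b tlo hsub').2 hp⟩
      · rintro ⟨⟨_, hins⟩, h2⟩
        refine ⟨by rw [hch]; exact hins, ?_⟩
        rintro ⟨hth, hp⟩
        exact h2 ⟨hth, (ih thi' hlen' U Ws a b tlo hsub').1 hp⟩

/-! ### Claim B : splitting identity at the head slot -/

theorem claimB {E D : Finset S} {y : S} (hDE : D = E.erase y) (hyE : y ∈ E)
    (U : Set (Finset S)) (Ws : List (Set (Finset S))) (hU : upsetIn E U)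
    {a b : List S} {tlo : List (List S)}
    (hsub' : (b :: a :: tlo).flatten.toFinset ⊆ D)
    (hsubE : ((a ++ y :: b) :: tlo).flatten.toFinset ⊆ E) :
    (Rq (U :: Ws) ((a ++ y :: b) :: tlo) ↔
      ((b = [] ∧ Rq ((U :: Ws).map (res D)) (a :: tlo)) ∨
        Rq (quo D y U :: (U :: Ws).map (res D)) (b :: a :: tlo))) ∧
    ¬((b = [] ∧ Rq ((U :: Ws).map (res D)) (a :: tlo)) ∧
        Rq (quo D y U :: (U :: Ws).map (res D)) (b :: a :: tlo)) := by
  have hc : ((a ++ y :: b) :: tlo).flatten.toFinset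
      = insert y ((b :: a :: tlo).flatten.toFinset) := ctn_split [] a b tlo
  have hLHS : Rq (U :: Ws) ((a ++ y :: b) :: tlo) ↔
      ((a ++ y :: b) :: tlo).flatten.toFinset ∈ U := by
    rw [Rq_cons]
    constructor
    · exact fun h => h.1
    · intro h; exact ⟨h, by rintro ⟨hh, _⟩; simp at hh⟩
  have hii : Rq (quo D y U :: (U :: Ws).map (res D)) (b :: a :: tlo) ↔
      (((a ++ y :: b) :: tlo).flatten.toFinset ∈ U ∧
        ¬(b = [] ∧ Rq ((U :: Ws).map (res D)) (a :: tlo))) := by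
    rw [Rq_cons]
    constructor
    · rintro ⟨⟨h1, h2⟩, h3⟩
      rw [hc]; exact ⟨h2, h3⟩
    · rintro ⟨h1, h3⟩
      rw [hc] at h1
      exact ⟨⟨hsub', h1⟩, h3⟩
  constructor
  · rw [hLHS, hii]
    constructor
    · intro h
      by_cases hcase : b = [] ∧ Rq ((U :: Ws).map (res D)) (a :: tlo)
      · exact Or.inl hcase
      · exact Or.inr ⟨h, hcase⟩
    · rintro (⟨hb, hr⟩ | ⟨h, _⟩)
      · -- the head of Rq on the restricted chain gives membership in (res D U)
        subst hb
        have h1 : (a :: tlo).flatten.toFinset ∈ res D U := by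
          cases hr with
          | intro h1 _ => simpa using h1
        have h2 : (a :: tlo).flatten.toFinset ∈ U := h1.1
        have h3 : (a :: tlo).flatten.toFinset ⊆ ((a ++ y :: []) :: tlo).flatten.toFinset := by
          intro x hx
          simp only [flatten_cons, toFinset_append, Finset.mem_union] at hx ⊢
          rcases hx with hx | hx
          · exact Or.inl (by simp at hx ⊢; exact Or.inl hx)
          · exact Or.inr hx
        exact (hU _ h2).2 _ h3 hsubE
      · exact h
  · rw [hii]
    rintro ⟨hcase, _, hneg⟩
    exact hneg hcase



/-! ### covers, good pairs/tuples, lifts -/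

def covers (p : List (List S) × Finset S) (t : List (List S)) : Prop :=
  List.Forall₂ List.Sublist t p.1 ∧ p.2 ⊆ t.flatten.toFinset

def goodPair (E : Finset S) (k : ℕ) (p : List (List S) × Finset S) : Prop :=
  p.1.length = k ∧ p.1.flatten.Nodup ∧ p.1.flatten.toFinset = E ∧ p.2 ⊆ E

def goodTup (E : Finset S) (k : ℕ) (t : List (List S)) : Prop :=
  t.length = k ∧ t.flatten.Nodup ∧ t.flatten.toFinset ⊆ E

def surg (y : S) : ℕ → List (List S) → List (List S)
  | 0, b :: a :: lo => (a ++ y :: b) :: lo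
  | n+1, h :: rest => h :: surg y n rest
  | _, l => l

theorem surg_decomp (y : S) : ∀ (hi : List (List S)) (b a : List S) (lo : List (List S)),
    surg y hi.length (hi ++ b :: a :: lo) = hi ++ (a ++ y :: b) :: lo := by
  intro hi
  induction hi with
  | nil => intro b a lo; rfl
  | cons c hi' ih =>
    intro b a lo
    show c :: surg y hi'.length (hi' ++ b :: a :: lo) = _
    rw [ih, cons_append]

def liftA (y : S) (p : List (List S) × Finset S) : List (List S) × Finset S :=
  (p.1.modifyHead (· ++ [y]), p.2)

def liftB (y : S) (j : ℕ) (p : List (List S) × Finset S) : List (List S) × Finset S :=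
  (surg y j p.1, insert y p.2)

theorem exists_decomp_one {α : Type*} : ∀ (j : ℕ) (l : List α), j + 1 ≤ l.length →
    ∃ hi v lo, l = hi ++ v :: lo ∧ hi.length = j := by
  intro j
  induction j with
  | zero =>
    intro l hl
    match l, hl with
    | v :: lo, _ => exact ⟨[], v, lo, rfl, rfl⟩
  | succ n ih =>
    intro l hl
    match l, hl with
    | c :: l', hl =>
      obtain ⟨hi, v, lo, he, hlen⟩ := ih l' (by simp at hl; omega)
      exact ⟨c :: hi, v, lo, by simp [he], by simp [hlen]⟩

theorem flatten_replicate_nil (n : ℕ) : (List.replicate n ([] : List S)).flatten = [] := by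
  induction n with
  | zero => rfl
  | succ m ih => rw [replicate_succ, flatten_cons, nil_append, ih]

theorem forall₂_sublist_replicate (n : ℕ) :
    List.Forall₂ (List.Sublist (α := S)) (List.replicate n []) (List.replicate n []) := by
  induction n with
  | zero => exact Forall₂.nil
  | succ m ih => rw [replicate_succ]; exact Forall₂.cons (nil_sublist _) ih

/-! ### the main combinatorial lemma -/

theorem GL_exists (E : Finset S) : ∀ (Us : List (Set (Finset S))), (∀ U ∈ Us, upsetIn E U) →
    ∃ P : Set (List (List S) × Finset S),
      (∀ p ∈ P, goodPair E Us.length p) ∧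
      (∀ t, goodTup E Us.length t →
        (Rq Us t → ∃! p, p ∈ P ∧ covers p t) ∧
        (¬ Rq Us t → ∀ p ∈ P, ¬ covers p t)) := by
  induction E using Finset.strongInductionOn with
  | _ E IH =>
    intro Us hUs
    cases Us with
    | nil =>
      refine ⟨∅, by simp, ?_⟩
      intro t _
      constructor
      · intro hR; exact absurd hR (Rq_nil_left t)
      · intro _ p hp; simp at hp
    | cons U0 Us' =>
      set k := (U0 :: Us').length with hk
      have hk1 : 1 ≤ k := by simp [hk]
      rcases E.eq_empty_or_nonempty with rfl | ⟨y, hy⟩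
      · -- base case : empty vertex set
        have htup : ∀ t, goodTup (∅ : Finset S) k t → t = List.replicate k [] := by
          rintro t ⟨hlen, _, hsub⟩
          rw [eq_replicate_iff]
          refine ⟨hlen, fun w hw => eq_nil_iff_forall_not_mem.2 fun x hx => ?_⟩
          have hxf : x ∈ t.flatten := mem_flatten.2 ⟨w, hw, hx⟩
          have := hsub (mem_toFinset.2 hxf)
          simp at this
        by_cases hR : Rq (U0 :: Us') (List.replicate k [])
        · refine ⟨{(List.replicate k [], ∅)}, ?_, ?_⟩
          · rintro p hp
            rw [Set.mem_singleton_iff] at hp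
            subst hp
            refine ⟨by simp, ?_, ?_, by simp⟩
            · rw [flatten_replicate_nil]; exact nodup_nil
            · rw [flatten_replicate_nil]; simp
          · intro t ht
            have hteq := htup t ht
            subst hteq
            constructor
            · intro _
              refine ⟨(List.replicate k [], ∅), ⟨rfl, ?_, by simp⟩, ?_⟩
              · exact forall₂_sublist_replicate k
              · rintro q ⟨hq, _⟩
                rw [Set.mem_singleton_iff] at hq
                exact hq
            · intro hnR; exact absurd hR hnR
        · refine ⟨∅, by simp, ?_⟩
          intro t ht
          have hteq := htup t ht
          subst hteq
          constructor
          · intro hR'; exact absurd hR' hR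
          · intro _ p hp; simp at hp
      · -- main case : pick a vertex y
        set D := E.erase y with hD
        have hyD : y ∉ D := Finset.notMem_erase y E
        have hDE : D ⊆ E := Finset.erase_subset y E
        have hDss : D ⊂ E := Finset.erase_ssubset hy
        set UsR := (U0 :: Us').map (res D) with hUsR
        have hUsRlen : UsR.length = k := by simp [hUsR, hk]
        set chainB : ℕ → List (Set (Finset S)) := fun j =>
          if j = 0 then quo D y U0 :: UsR
          else ((U0 :: Us').take (j+1)).map (quo D y) ++ List.replicate (k - j) ∅ with hchainB
        have hupres : ∀ U ∈ (U0 :: Us'), upsetIn D (res D U) := by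
          intro U hU G hG
          refine ⟨hG.2, fun G' h1 h2 => ⟨(hUs U hU G hG.1).2 G' h1 (h2.trans hDE), h2⟩⟩
        have hupquo : ∀ U ∈ (U0 :: Us'), upsetIn D (quo D y U) := by
          intro U hU G hG
          refine ⟨hG.1, fun G' h1 h2 => ⟨h2, ?_⟩⟩
          refine (hUs U hU _ hG.2).2 _ (Finset.insert_subset_insert y h1) ?_
          intro x hx
          rcases Finset.mem_insert.1 hx with rfl | hx
          · exact hy
          · exact hDE (h2 hx)
        have hupempty : upsetIn D (∅ : Set (Finset S)) := by rintro G ⟨⟩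
        have hUsRup : ∀ U ∈ UsR, upsetIn D U := by
          intro U hU
          rw [hUsR, mem_map] at hU
          obtain ⟨V, hV, rfl⟩ := hU
          exact hupres V hV
        have hchainB0 : chainB 0 = quo D y U0 :: UsR := by simp [hchainB]
        have hchainBpos : ∀ j : ℕ, j ≠ 0 →
            chainB j = ((U0 :: Us').take (j+1)).map (quo D y) ++ List.replicate (k - j) ∅ := by
          intro j hj; simp [hchainB, hj]
        have hchainBup : ∀ j, ∀ U ∈ chainB j, upsetIn D U := by
          intro j U hU
          by_cases hj : j = 0
          · subst hj
            rw [hchainB0] at hU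
            rcases mem_cons.1 hU with rfl | hU
            · exact hupquo U0 (mem_cons_self)
            · exact hUsRup U hU
          · rw [hchainBpos j hj, mem_append] at hU
            rcases hU with hU | hU
            · rw [mem_map] at hU
              obtain ⟨V, hV, rfl⟩ := hU
              exact hupquo V ((take_subset _ _) hV)
            · rw [eq_of_mem_replicate hU]
              exact hupempty
        have hchainBlen : ∀ j, j < k → (chainB j).length = k + 1 := by
          intro j hj
          by_cases hj0 : j = 0
          · subst hj0; rw [hchainB0]; simp [hUsRlen]
          · rw [hchainBpos j hj0]
            have h1 : j + 1 ≤ (U0 :: Us').length := by rw [← hk]; exact hj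
            rw [length_append, length_map, length_take, length_replicate,
              Nat.min_eq_left h1]
            omega
        obtain ⟨PA, hPAgood, hPAcov⟩ := IH D hDss UsR hUsRup
        have hex : ∀ j : ℕ, ∃ P : Set (List (List S) × Finset S), j < k →
            ((∀ p ∈ P, goodPair D (k+1) p) ∧
            (∀ t, goodTup D (k+1) t →
              (Rq (chainB j) t → ∃! p, p ∈ P ∧ covers p t) ∧
              (¬ Rq (chainB j) t → ∀ p ∈ P, ¬ covers p t))) := by
          intro j
          by_cases hj : j < k
          · obtain ⟨P, h1, h2⟩ := IH D hDss (chainB j) (hchainBup j)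
            rw [hchainBlen j hj] at h1 h2
            exact ⟨P, fun _ => ⟨h1, h2⟩⟩
          · exact ⟨∅, fun h => absurd h hj⟩
        choose PB hPB using hex
        set P : Set (List (List S) × Finset S) :=
          {q | (∃ p ∈ PA, liftA y p = q) ∨ ∃ j, j < k ∧ ∃ p ∈ PB j, liftB y j p = q} with hP
        -- goodness of all pairs in P
        have hPgood : ∀ q ∈ P, goodPair E k q := by
          rintro q (⟨p, hp, rfl⟩ | ⟨j, hj, p, hp, rfl⟩)
          · obtain ⟨hlen, hnd, hctn, hsub⟩ := hUsRlen ▸ hPAgood p hp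
            obtain ⟨α, rest, hp1⟩ : ∃ α rest, p.1 = α :: rest := by
              cases hp1 : p.1 with
              | nil => rw [hp1] at hlen; rw [← hlen] at hk1; simp at hk1
              | cons α rest => exact ⟨α, rest, rfl⟩
            have hflat : (liftA y p).1.flatten = α ++ y :: rest.flatten := by
              simp [liftA, hp1, modifyHead]
            have hyp : y ∉ p.1.flatten := fun hc => hyD (hctn ▸ mem_toFinset.2 hc)
            have hperm : (liftA y p).1.flatten ~ y :: p.1.flatten := by
              rw [hflat, hp1, flatten_cons]
              exact perm_middle
            refine ⟨by simp only [liftA, length_modifyHead]; exact hlen, ?_, ?_, hsub.trans hDE⟩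
            · exact hperm.nodup_iff.2 (nodup_cons.2 ⟨hyp, hnd⟩)
            · rw [toFinset_eq_of_perm _ _ hperm]
              simp only [toFinset_cons, hctn]
              rw [hD, Finset.insert_erase hy]
          · obtain ⟨hlen, hnd, hctn, hsub⟩ := (hPB j hj).1 p hp
            obtain ⟨phi, pb, pa, plo, hp1, hphilen⟩ :=
              exists_decomp_two j p.1 (by omega)
            have hsurg : (liftB y j p).1 = phi ++ (pa ++ y :: pb) :: plo := by
              simp only [liftB]
              rw [hp1, ← hphilen, surg_decomp]
            have hyp : y ∉ p.1.flatten := fun hc => hyD (hctn ▸ mem_toFinset.2 hc)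
            have hperm : (liftB y j p).1.flatten ~ y :: p.1.flatten := by
              rw [hsurg, hp1]
              exact perm_surg y phi pa pb plo
            refine ⟨?_, ?_, ?_, ?_⟩
            · rw [hsurg]
              have := hp1 ▸ hlen
              simp only [length_append, length_cons] at this ⊢
              omega
            · exact hperm.nodup_iff.2 (nodup_cons.2 ⟨hyp, hnd⟩)
            · rw [toFinset_eq_of_perm _ _ hperm]
              simp only [toFinset_cons, hctn]
              rw [hD, Finset.insert_erase hy]
            · simp only [liftB]
              exact Finset.insert_subset hy (hsub.trans hDE)
        refine ⟨P, hPgood, ?_⟩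
        rintro t ⟨hlen, hnod, hsubE⟩
        by_cases hyt : y ∈ t.flatten
        -- ===================== y occurs in t =====================
        · obtain ⟨v0, hv0t, hyv0⟩ := mem_flatten.1 hyt
          obtain ⟨thi, tlo, ht⟩ := append_of_mem hv0t
          obtain ⟨a, b, hv⟩ := append_of_mem hyv0
          subst hv
          subst ht
          have hsurgnd := surg_nodup (y := y) (thi := thi) (tlo := tlo) (a := a) (b := b) hnod
          have hnd' : (thi ++ b :: a :: tlo).flatten.Nodup := hsurgnd.1
          have hynotin : y ∉ (thi ++ b :: a :: tlo).flatten := hsurgnd.2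
          have hctnsplit := ctn_split (y := y) thi a b tlo
          have hsubD' : (thi ++ b :: a :: tlo).flatten.toFinset ⊆ D := by
            intro x hx
            rw [hD, Finset.mem_erase]
            constructor
            · rintro rfl; exact hynotin (mem_toFinset.1 hx)
            · apply hsubE; rw [hctnsplit]; exact Finset.mem_insert_of_mem hx
          have h4 : ¬(y ∈ thi.flatten ∨ (y ∈ b ∨ y ∈ a ∨ y ∈ tlo.flatten)) := by
            intro hc
            apply hynotin
            simp only [flatten_append, flatten_cons, mem_append] at *
            tauto
          push_neg at h4
          obtain ⟨hythi, hyb, hya, hytlo⟩ := h4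
          have hlen2 : thi.length + 1 + tlo.length = k := by
            rw [← hlen]; simp [length_append]; omega
          have hj'k : thi.length < k := by omega
          have hgt' : goodTup D (k+1) (thi ++ b :: a :: tlo) :=
            ⟨by simp [length_append]; omega, hnd', hsubD'⟩
          -- characterization of coverage by liftB pairs
          have hcovB : ∀ j, j < k → ∀ p ∈ PB j,
              (covers (liftB y j p) (thi ++ (a ++ y :: b) :: tlo) ↔
                (j = thi.length ∧ covers p (thi ++ b :: a :: tlo))) := by
            intro j hj p hp
            obtain ⟨hplen, hpnd, hpctn, hpsub⟩ := (hPB j hj).1 p hp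
            obtain ⟨phi, pb, pa, plo, hp1, hphilen⟩ := exists_decomp_two j p.1 (by omega)
            have hlB1 : (liftB y j p).1 = phi ++ (pa ++ y :: pb) :: plo := by
              simp only [liftB]; rw [hp1, ← hphilen, surg_decomp]
            have hyp1 : y ∉ p.1.flatten := fun hc => hyD (hpctn ▸ mem_toFinset.2 hc)
            have h5 : ¬(y ∈ phi.flatten ∨ (y ∈ pb ∨ y ∈ pa ∨ y ∈ plo.flatten)) := by
              intro hc
              apply hyp1
              rw [hp1]
              simp only [flatten_append, flatten_cons, mem_append] at *
              tauto
            push_neg at h5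
            obtain ⟨hyphi, hypb, hypa, hyplo⟩ := h5
            have hqnd : (liftB y j p).1.flatten.Nodup :=
              (hPgood _ (Or.inr ⟨j, hj, p, hp, rfl⟩)).2.1
            constructor
            · rintro ⟨hf, hs⟩
              rw [hlB1] at hf
              obtain ⟨m₁, w, m₂, hM, hmlen, hf1, hf2, hf3⟩ := forall₂_decomp_middle hf
              have hyw : y ∈ w := hf2.subset (by simp)
              obtain ⟨hm1, hw, hm2⟩ := slot_unique (y := y)
                (by rw [← hlB1]; exact hqnd) hM (by simp) hyw
              subst hm1; subst hm2
              rw [← hw] at hf2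
              have hjj' : j = thi.length := by rw [← hphilen, hmlen]
              obtain ⟨haa, hbb⟩ := (sublist_split hya hypa hypb).1 hf2
              refine ⟨hjj', ?_, ?_⟩
              · rw [hp1, forall₂_append_iff_len (by rw [hmlen])]
                exact ⟨hf1, forall₂_cons.2 ⟨hbb, forall₂_cons.2 ⟨haa, hf3⟩⟩⟩
              · intro x hx
                have hxD : x ∈ D := hpsub hx
                have hx2 : x ∈ insert y ((thi ++ b :: a :: tlo).flatten.toFinset) := by
                  rw [← hctnsplit]
                  exact hs (Finset.mem_insert_of_mem hx)
                rcases Finset.mem_insert.1 hx2 with rfl | hx3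
                · exact absurd hxD hyD
                · exact hx3
            · rintro ⟨hjj', hf, hs⟩
              rw [hp1, forall₂_append_iff_len (by rw [hphilen, hjj'])] at hf
              obtain ⟨hf1, hf2⟩ := hf
              rw [forall₂_cons] at hf2
              obtain ⟨hfb, hf2'⟩ := hf2
              rw [forall₂_cons] at hf2'
              obtain ⟨hfa, hf3⟩ := hf2'
              constructor
              · rw [hlB1, forall₂_append_iff_len (by rw [hphilen, hjj'])]
                exact ⟨hf1, forall₂_cons.2 ⟨(sublist_split hya hypa hypb).2 ⟨hfa, hfb⟩, hf3⟩⟩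
              · intro x hx
                rw [hctnsplit]
                rcases Finset.mem_insert.1 hx with rfl | hx2
                · exact Finset.mem_insert_self _ _
                · exact Finset.mem_insert_of_mem (hs hx2)
          rcases Nat.eq_zero_or_pos thi.length with hj'0 | hj'pos
          -- ----- the head-slot case (thi = []) -----
          · have hthi : thi = [] := length_eq_zero_iff.1 hj'0
            subst hthi
            simp only [nil_append, length_nil] at hcovB hgt' hsubD' hctnsplit hsubE hlen2 ⊢
            have hup0 : upsetIn E U0 := hUs U0 (mem_cons_self)
            have hclaim := claimB (E := E) (D := D) (y := y) hD hy U0 Us' hup0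
              (a := a) (b := b) (tlo := tlo) hsubD' hsubE
            rw [← hUsR] at hclaim
            rw [← hchainB0] at hclaim
            have hgt'' : goodTup D UsR.length (a :: tlo) := by
              refine ⟨by rw [hUsRlen]; simp; omega, ?_, ?_⟩
              · have hsub2 : (a :: tlo).flatten <+ (b :: a :: tlo).flatten := by
                  simp only [flatten_cons]
                  exact sublist_append_right b _
                exact hsub2.nodup (by simpa using hnd')
              · intro x hx
                apply hsubD'
                rw [mem_toFinset] at hx ⊢
                simp only [flatten_cons, mem_append] at hx ⊢
                tauto
            have hcovA0 : ∀ p ∈ PA, (covers (liftA y p) ((a ++ y :: b) :: tlo) ↔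
                (b = [] ∧ covers p (a :: tlo))) := by
              intro p hp
              obtain ⟨hplen, _, hpctn, hpsub⟩ := hPAgood p hp
              rw [hUsRlen] at hplen
              obtain ⟨α, rest, hp1⟩ : ∃ α rest, p.1 = α :: rest := by
                cases hq : p.1 with
                | nil => rw [hq] at hplen; rw [← hplen] at hk1; simp at hk1
                | cons α rest => exact ⟨α, rest, rfl⟩
              have hlA1 : (liftA y p).1 = (α ++ [y]) :: rest := by
                simp only [liftA]; rw [hp1]; rfl
              have hyp1 : y ∉ p.1.flatten := fun hc => hyD (hpctn ▸ mem_toFinset.2 hc)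
              have hyα : y ∉ α := fun hc => hyp1 (by rw [hp1, flatten_cons]; exact mem_append_left _ hc)
              constructor
              · rintro ⟨hf, hs⟩
                rw [hlA1, forall₂_cons] at hf
                obtain ⟨hb, haα⟩ := sublist_append_single_mem hf.1 hya hyα
                subst hb
                refine ⟨rfl, ?_, ?_⟩
                · rw [hp1, forall₂_cons]; exact ⟨haα, hf.2⟩
                · intro x hx
                  have hxD : x ∈ D := hpsub hx
                  have hx2 : x ∈ insert y (([] :: a :: tlo).flatten.toFinset) := by
                    rw [← hctnsplit]; exact hs hx
                  rcases Finset.mem_insert.1 hx2 with rfl | hx3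
                  · exact absurd hxD hyD
                  · simpa using hx3
              · rintro ⟨hb, hf, hs⟩
                subst hb
                rw [hp1, forall₂_cons] at hf
                constructor
                · rw [hlA1, forall₂_cons]
                  exact ⟨hf.1.append (Sublist.refl [y]), hf.2⟩
                · intro x hx
                  rw [hctnsplit]
                  have : x ∈ ([] :: a :: tlo).flatten.toFinset := by simpa using hs hx
                  exact Finset.mem_insert_of_mem this
            constructor
            · intro hR
              rcases (hclaim.1).1 hR with ⟨hb, hRA⟩ | hRB
              · obtain ⟨p0, ⟨hp0, hp0c⟩, huniq⟩ := (hPAcov (a :: tlo) hgt'').1 hRA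
                refine ⟨liftA y p0, ⟨Or.inl ⟨p0, hp0, rfl⟩, (hcovA0 p0 hp0).2 ⟨hb, hp0c⟩⟩, ?_⟩
                rintro q ⟨hqP, hqc⟩
                rw [hP, Set.mem_setOf_eq] at hqP
                rcases hqP with ⟨p1, hp1m, rfl⟩ | ⟨j, hj, p1, hp1m, rfl⟩
                · obtain ⟨_, hc1⟩ := (hcovA0 p1 hp1m).1 hqc
                  rw [huniq p1 ⟨hp1m, hc1⟩]
                · obtain ⟨hj0, hc1⟩ := (hcovB j hj p1 hp1m).1 hqc
                  exfalso
                  have hnRB : ¬ Rq (chainB 0) (b :: a :: tlo) :=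
                    fun hRB' => hclaim.2 ⟨⟨hb, hRA⟩, hRB'⟩
                  subst hj0
                  exact ((hPB 0 (by omega)).2 _ hgt').2 hnRB p1 hp1m hc1
              · obtain ⟨p0, ⟨hp0, hp0c⟩, huniq⟩ := ((hPB 0 (by omega)).2 _ hgt').1 hRB
                refine ⟨liftB y 0 p0, ⟨Or.inr ⟨0, by omega, p0, hp0, rfl⟩,
                  (hcovB 0 (by omega) p0 hp0).2 ⟨rfl, hp0c⟩⟩, ?_⟩
                rintro q ⟨hqP, hqc⟩
                rw [hP, Set.mem_setOf_eq] at hqP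
                rcases hqP with ⟨p1, hp1m, rfl⟩ | ⟨j, hj, p1, hp1m, rfl⟩
                · exfalso
                  obtain ⟨hb, hc1⟩ := (hcovA0 p1 hp1m).1 hqc
                  by_cases hRA : Rq UsR (a :: tlo)
                  · exact hclaim.2 ⟨⟨hb, hRA⟩, hRB⟩
                  · exact (hPAcov (a :: tlo) hgt'').2 hRA p1 hp1m hc1
                · obtain ⟨hj0, hc1⟩ := (hcovB j hj p1 hp1m).1 hqc
                  subst hj0
                  rw [huniq p1 ⟨hp1m, hc1⟩]
            · intro hnR q hqP hqc
              have hnor : ¬((b = [] ∧ Rq UsR (a :: tlo)) ∨ Rq (chainB 0) (b :: a :: tlo)) :=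
                fun h => hnR ((hclaim.1).2 h)
              rw [hP, Set.mem_setOf_eq] at hqP
              rcases hqP with ⟨p1, hp1m, rfl⟩ | ⟨j, hj, p1, hp1m, rfl⟩
              · obtain ⟨hb, hc1⟩ := (hcovA0 p1 hp1m).1 hqc
                by_cases hRA : Rq UsR (a :: tlo)
                · exact hnor (Or.inl ⟨hb, hRA⟩)
                · exact (hPAcov (a :: tlo) hgt'').2 hRA p1 hp1m hc1
              · obtain ⟨hj0, hc1⟩ := (hcovB j hj p1 hp1m).1 hqc
                subst hj0
                by_cases hRB : Rq (chainB 0) (b :: a :: tlo)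
                · exact hnor (Or.inr hRB)
                · exact ((hPB 0 (by omega)).2 _ hgt').2 hRB p1 hp1m hc1
          -- ----- the deep-slot case (thi ≠ []) -----
          · obtain ⟨Vs, U, Ws, hUsdec, hVslen⟩ :=
              exists_decomp_one thi.length (U0 :: Us') (by rw [← hk]; omega)
            have htake : (U0 :: Us').take (thi.length + 1) = Vs ++ [U] := by
              rw [hUsdec, ← hVslen, take_append]
              rw [take_of_length_le (by omega), Nat.add_sub_cancel_left]; rfl
            have hrep : k - thi.length = tlo.length + 1 := by omega
            have hchainBj' : chainB thi.length =
                (Vs ++ [U]).map (quo D y) ++ List.replicate (tlo.length + 1) ∅ := by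
              rw [hchainBpos thi.length (by omega), htake, hrep]
            have hReq : Rq (U0 :: Us') (thi ++ (a ++ y :: b) :: tlo) ↔
                Rq (chainB thi.length) (thi ++ b :: a :: tlo) := by
              rw [hUsdec, hchainBj']
              exact claimA Vs thi (by rw [hVslen]) U Ws a b tlo hsubD'
            have hcovAnone : ∀ p ∈ PA, ¬ covers (liftA y p) (thi ++ (a ++ y :: b) :: tlo) := by
              rintro p hp ⟨hf, _⟩
              obtain ⟨hplen, _, hpctn, _⟩ := hPAgood p hp
              rw [hUsRlen] at hplen
              obtain ⟨α, rest, hp1⟩ : ∃ α rest, p.1 = α :: rest := by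
                cases hq : p.1 with
                | nil => rw [hq] at hplen; rw [← hplen] at hk1; simp at hk1
                | cons α rest => exact ⟨α, rest, rfl⟩
              have hlA1 : (liftA y p).1 = (α ++ [y]) :: rest := by
                simp only [liftA]; rw [hp1]; rfl
              cases thi with
              | nil => simp at hj'pos
              | cons th thi₂ =>
                rw [hlA1, cons_append, forall₂_cons] at hf
                obtain ⟨w, hwrest, hvw⟩ := forall₂_rel_of_mem hf.2
                  (mem_append_right thi₂ (mem_cons_self))
                have hyw : y ∈ w := hvw.subset (by simp)
                have hwp : w ∈ p.1 := by rw [hp1]; exact mem_cons_of_mem _ hwrest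
                have : y ∈ p.1.flatten := mem_flatten.2 ⟨w, hwp, hyw⟩
                exact hyD (hpctn ▸ mem_toFinset.2 this)
            constructor
            · intro hR
              obtain ⟨p0, ⟨hp0, hp0c⟩, huniq⟩ :=
                ((hPB thi.length hj'k).2 _ hgt').1 (hReq.1 hR)
              refine ⟨liftB y thi.length p0,
                ⟨Or.inr ⟨thi.length, hj'k, p0, hp0, rfl⟩,
                  (hcovB thi.length hj'k p0 hp0).2 ⟨rfl, hp0c⟩⟩, ?_⟩
              rintro q ⟨hqP, hqc⟩
              rw [hP, Set.mem_setOf_eq] at hqP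
              rcases hqP with ⟨p1, hp1m, rfl⟩ | ⟨j, hj, p1, hp1m, rfl⟩
              · exact absurd hqc (hcovAnone p1 hp1m)
              · obtain ⟨hjj', hc1⟩ := (hcovB j hj p1 hp1m).1 hqc
                subst hjj'
                rw [huniq p1 ⟨hp1m, hc1⟩]
            · intro hnR q hqP hqc
              rw [hP, Set.mem_setOf_eq] at hqP
              rcases hqP with ⟨p1, hp1m, rfl⟩ | ⟨j, hj, p1, hp1m, rfl⟩
              · exact hcovAnone p1 hp1m hqc
              · obtain ⟨hjj', hc1⟩ := (hcovB j hj p1 hp1m).1 hqc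
                subst hjj'
                exact ((hPB thi.length hj'k).2 _ hgt').2
                  (fun hR' => hnR (hReq.2 hR')) p1 hp1m hc1
        -- ===================== y does not occur in t =====================
        · have htD : t.flatten.toFinset ⊆ D := by
            intro x hx
            rw [hD, Finset.mem_erase]
            exact ⟨fun he => hyt (he ▸ mem_toFinset.1 hx), hsubE hx⟩
          have hgt : goodTup D UsR.length t := ⟨by rw [hUsRlen]; exact hlen, hnod, htD⟩
          have hRiff : Rq (U0 :: Us') t ↔ Rq UsR t := Rq_res D _ t htD
          have hcovA : ∀ p ∈ PA, (covers (liftA y p) t ↔ covers p t) := by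
            intro p hp
            obtain ⟨hplen, _, hpctn, _⟩ := hPAgood p hp
            rw [hUsRlen] at hplen
            obtain ⟨α, rest, hp1⟩ : ∃ α rest, p.1 = α :: rest := by
              cases hq : p.1 with
              | nil => rw [hq] at hplen; rw [← hplen] at hk1; simp at hk1
              | cons α rest => exact ⟨α, rest, rfl⟩
            obtain ⟨v, ts, ht1⟩ : ∃ v ts, t = v :: ts := by
              cases hq : t with
              | nil => rw [hq] at hlen; rw [← hlen] at hk1; simp at hk1
              | cons v ts => exact ⟨v, ts, rfl⟩
            have hyv : y ∉ v := fun hc => hyt (by rw [ht1, flatten_cons]; exact mem_append_left _ hc)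
            have hlA1 : (liftA y p).1 = (α ++ [y]) :: rest := by
              simp only [liftA]; rw [hp1]; rfl
            constructor
            · rintro ⟨hf, hs⟩
              rw [hlA1, ht1, forall₂_cons] at hf
              refine ⟨?_, hs⟩
              rw [ht1, hp1, forall₂_cons]
              exact ⟨sublist_append_single hf.1 hyv, hf.2⟩
            · rintro ⟨hf, hs⟩
              rw [ht1, hp1, forall₂_cons] at hf
              refine ⟨?_, hs⟩
              rw [hlA1, ht1, forall₂_cons]
              exact ⟨hf.1.trans (sublist_append_left α [y]), hf.2⟩
          have hcovBnone : ∀ j, j < k → ∀ p ∈ PB j, ¬ covers (liftB y j p) t := by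
            rintro j hj p hp ⟨hf, hs⟩
            apply hyt
            have hym : y ∈ (liftB y j p).2 := Finset.mem_insert_self y _
            exact mem_toFinset.1 (hs hym)
          constructor
          · intro hR
            obtain ⟨p0, ⟨hp0, hp0c⟩, huniq⟩ := (hPAcov t hgt).1 (hRiff.1 hR)
            refine ⟨liftA y p0, ⟨Or.inl ⟨p0, hp0, rfl⟩, (hcovA p0 hp0).2 hp0c⟩, ?_⟩
            rintro q ⟨hqP, hqc⟩
            rw [hP, Set.mem_setOf_eq] at hqP
            rcases hqP with ⟨p1, hp1m, rfl⟩ | ⟨j, hj, p1, hp1m, rfl⟩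
            · rw [huniq p1 ⟨hp1m, (hcovA p1 hp1m).1 hqc⟩]
            · exact absurd hqc (hcovBnone j hj p1 hp1m)
          · intro hnR q hqP hqc
            rw [hP, Set.mem_setOf_eq] at hqP
            rcases hqP with ⟨p1, hp1m, rfl⟩ | ⟨j, hj, p1, hp1m, rfl⟩
            · exact (hPAcov t hgt).2 (fun hR' => hnR (hRiff.2 hR')) p1 hp1m
                ((hcovA p1 hp1m).1 hqc)
            · exact hcovBnone j hj p1 hp1m hqc

/-! ### top level : partition of the complex of injective words -/

theorem exists_maximal_above (Dl : Finset (Finset S)) {H : Finset S} (hH : H ∈ Dl) :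
    ∃ G ∈ Dl, H ⊆ G ∧ ∀ K ∈ Dl, ¬ G < K := by
  classical
  obtain ⟨G, hGT, hGmax⟩ : ∃ G ∈ Dl.filter (fun K => H ⊆ K),
      ∀ x ∈ Dl.filter (fun K => H ⊆ K), ¬ G < x := by
    obtain ⟨m, hm⟩ := Finset.exists_maximal (s := Dl.filter (fun K => H ⊆ K))
      ⟨H, Finset.mem_filter.2 ⟨hH, subset_refl H⟩⟩
    exact ⟨m, hm.1, fun x hx hlt => hlt.not_ge (hm.2 hx hlt.le)⟩
  rw [Finset.mem_filter] at hGT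
  refine ⟨G, hGT.1, hGT.2, fun K hK hGK => ?_⟩
  exact hGmax K (Finset.mem_filter.2 ⟨hK, hGT.2.trans hGK.le⟩) hGK

theorem maxword_clause {τ : List S} (Dl : Finset (Finset S)) (hτ : τ.Nodup)
    (hmax : ∀ K ∈ Dl, ¬ τ.toFinset < K) :
    ∀ u : List S, u.Nodup → u.toFinset ∈ Dl → τ <+ u → u = τ := by
  intro u hu hum hsub
  by_contra hne
  have hlt : τ.length < u.length :=
    lt_of_le_of_ne hsub.length_le (fun he => hne (hsub.eq_of_length he).symm)
  have hsubset : τ.toFinset ⊆ u.toFinset := fun x hx =>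
    mem_toFinset.2 (hsub.subset (mem_toFinset.1 hx))
  have hcard : τ.toFinset.card < u.toFinset.card := by
    rw [toFinset_card_of_nodup hτ, toFinset_card_of_nodup hu]; exact hlt
  exact hmax _ hum (lt_of_le_of_ne hsubset (fun he => by rw [he] at hcard; exact lt_irrefl _ hcard))

theorem main_partition (Dl : Finset (Finset S)) (hdown : ∀ σ ∈ Dl, ∀ τ ⊆ σ, τ ∈ Dl) :
    ∃ pairs : Set (List S × List S),
      (∀ p ∈ pairs, p.1.Sublist p.2 ∧
        (p.1.Nodup ∧ p.1.toFinset ∈ Dl) ∧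
        (p.2.Nodup ∧ p.2.toFinset ∈ Dl) ∧
        (∀ u : List S, u.Nodup → u.toFinset ∈ Dl → p.2.Sublist u → u = p.2)) ∧
      (∀ w : List S, w.Nodup → w.toFinset ∈ Dl →
        ∃! p : List S × List S, p ∈ pairs ∧ p.1.Sublist w ∧ w.Sublist p.2) := by
  classical
  induction Dl using Finset.strongInductionOn with
  | _ Dl IH =>
    by_cases hD0 : Dl = ∅
    · subst hD0
      exact ⟨∅, by simp, fun w _ hw => by simp at hw⟩
    · obtain ⟨M, hM, hMmax⟩ : ∃ M ∈ Dl, ∀ x ∈ Dl, ¬ M < x := by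
          obtain ⟨m, hm⟩ := Finset.exists_maximal (Finset.nonempty_iff_ne_empty.2 hD0)
          exact ⟨m, hm.1, fun x hx hlt => hlt.not_ge (hm.2 hx hlt.le)⟩
      set Priv : Finset (Finset S) :=
        Dl.filter (fun G => G ⊆ M ∧ ∀ H ∈ Dl, G ⊆ H → H ⊆ M) with hPriv
      have hMP : M ∈ Priv := by
        rw [hPriv, Finset.mem_filter]
        refine ⟨hM, subset_refl M, fun H hH hMH => ?_⟩
        by_contra hc
        exact hMmax H hH (lt_of_le_of_ne hMH (fun he => hc (he ▸ subset_refl M)))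
      have hPrivM : ∀ G ∈ Priv, G ⊆ M ∧ ∀ H ∈ Dl, G ⊆ H → H ⊆ M := by
        intro G hG
        rw [hPriv, Finset.mem_filter] at hG
        exact hG.2
      set Dl' := Dl \ Priv with hDl'
      have hss : Dl' ⊂ Dl := by
        rw [hDl']
        exact Finset.sdiff_ssubset (Finset.filter_subset _ _) ⟨M, hMP⟩
      have hdown' : ∀ σ ∈ Dl', ∀ τ ⊆ σ, τ ∈ Dl' := by
        intro σ hσ τ hτσ
        rw [hDl', Finset.mem_sdiff] at hσ ⊢
        refine ⟨hdown σ hσ.1 τ hτσ, fun hτP => hσ.2 ?_⟩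
        obtain ⟨h1, h2⟩ := hPrivM τ hτP
        rw [hPriv, Finset.mem_filter]
        exact ⟨hσ.1, h2 σ hσ.1 hτσ, fun H hH hσH => h2 H hH (hτσ.trans hσH)⟩
      obtain ⟨pairs', h1', h2'⟩ := IH Dl' hss hdown'
      -- the upset of private faces inside M
      set U : Set (Finset S) := {G | G ∈ Priv} with hU
      have hupU : ∀ V ∈ [U], upsetIn M V := by
        intro V hV
        rcases mem_cons.1 hV with rfl | hV
        · intro G hG
          rw [hU, Set.mem_setOf_eq] at hG
          obtain ⟨hGM, hGall⟩ := hPrivM G hG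
          refine ⟨hGM, fun G' h1 h2 => ?_⟩
          rw [hU, Set.mem_setOf_eq, hPriv, Finset.mem_filter]
          exact ⟨hdown M hM G' h2, h2, fun H hH hG'H => hGall H hH (h1.trans hG'H)⟩
        · simp at hV
      obtain ⟨P1, hP1good, hP1cov⟩ := GL_exists M [U] hupU
      have hP1' : ∀ q ∈ P1, ∃ τ : List S, q.1 = [τ] ∧ τ.Nodup ∧ τ.toFinset = M ∧ q.2 ⊆ M := by
        intro q hq
        obtain ⟨hl, hnd, hct, hsub⟩ := hP1good q hq
        simp only [length_cons, length_nil] at hl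
        obtain ⟨τ, hq1⟩ : ∃ τ, q.1 = [τ] := by
          cases hq1 : q.1 with
          | nil => rw [hq1] at hl; simp at hl
          | cons τ rest =>
            cases rest with
            | nil => exact ⟨τ, rfl⟩
            | cons r rs => rw [hq1] at hl; simp at hl
        rw [hq1] at hnd hct
        simp only [flatten_cons, flatten_nil, append_nil] at hnd hct
        exact ⟨τ, hq1, hnd, hct, hsub⟩
      set f : (List (List S) × Finset S) → (List S × List S) :=
        fun q => (q.1.headI.filter (· ∈ q.2), q.1.headI) with hf
      have hfq : ∀ (q : List (List S) × Finset S) (τ : List S), q.1 = [τ] →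
          f q = (τ.filter (· ∈ q.2), τ) := by
        intro q τ hq1
        rw [hf]
        simp [hq1]
      have hRqiff : ∀ w : List S, Rq [U] [w] ↔ w.toFinset ∈ Priv := by
        intro w
        rw [Rq_cons]
        simp only [flatten_cons, flatten_nil, append_nil, hU, Set.mem_setOf_eq]
        constructor
        · exact fun h => h.1
        · intro h; exact ⟨h, by rintro ⟨_, hp⟩; exact (Rq_nil_right []) hp⟩
      have hcoviff : ∀ q ∈ P1, ∀ w : List S, w.Nodup →
          (covers q [w] ↔ ((f q).1 <+ w ∧ w <+ (f q).2)) := by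
        intro q hq w hw
        obtain ⟨τ, hq1, hτnd, hτct, hq2M⟩ := hP1' q hq
        rw [hfq q τ hq1]
        have hAs : q.2 ⊆ τ.toFinset := by rw [hτct]; exact hq2M
        have hint := interval_iff (τ := τ) (w := w) q.2 hτnd hAs
        constructor
        · rintro ⟨hfor, hsub⟩
          rw [hq1] at hfor
          rw [forall₂_cons] at hfor
          apply hint.2
          refine ⟨hfor.1, ?_⟩
          intro x hx
          have := hsub hx
          simpa using this
        · intro h
          obtain ⟨hwτ, hq2w⟩ := hint.1 h
          constructor
          · rw [hq1, forall₂_cons]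
            exact ⟨hwτ, Forall₂.nil⟩
          · intro x hx
            simp only [flatten_cons, flatten_nil, append_nil]
            exact hq2w hx
      set pairs : Set (List S × List S) := pairs' ∪ f '' P1 with hpairs
      refine ⟨pairs, ?_, ?_⟩
      -- ------------------- condition 1 -------------------
      · rintro p hp
        rw [hpairs] at hp
        rcases hp with hp | ⟨q, hq, rfl⟩
        · obtain ⟨hc1, hc2, hc3, hc4⟩ := h1' p hp
          have hDl'Dl : ∀ G ∈ Dl', G ∈ Dl := fun G hG => (Finset.mem_sdiff.1 (hDl' ▸ hG)).1
          refine ⟨hc1, ⟨hc2.1, hDl'Dl _ hc2.2⟩, ⟨hc3.1, hDl'Dl _ hc3.2⟩, ?_⟩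
          -- upgrade maximality from Dl' to Dl
          have hmax' : ∀ K ∈ Dl', ¬ p.2.toFinset < K := by
            intro K hK hltK
            obtain ⟨x, hxK, hxF⟩ := Finset.exists_of_ssubset hltK
            have hxp2 : x ∉ p.2 := fun hc => hxF (mem_toFinset.2 hc)
            have hund : (p.2 ++ [x]).Nodup := by
              rw [nodup_append']
              exact ⟨hc3.1, nodup_singleton x, by simpa using hxp2⟩
            have huct : (p.2 ++ [x]).toFinset ∈ Dl' := by
              apply hdown' K hK
              rw [toFinset_append]
              simp only [toFinset_cons, toFinset_nil]
              intro z hz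
              rcases Finset.mem_union.1 hz with hz | hz
              · exact hltK.le hz
              · simp at hz; subst hz; exact hxK
            have := hc4 (p.2 ++ [x]) hund huct (sublist_append_left _ _)
            have hlen := congrArg List.length this
            simp at hlen
          have hF' : p.2.toFinset ∈ Dl' := hc3.2
          -- find a maximal face of Dl above it, which stays in Dl'
          have hmaxDl : ∀ K ∈ Dl, ¬ p.2.toFinset < K := by
            have hnotP : p.2.toFinset ∉ Priv := (Finset.mem_sdiff.1 (hDl' ▸ hF')).2
            have hFDl : p.2.toFinset ∈ Dl := hDl'Dl _ hF'
            obtain ⟨H, hH, hFH, hHM⟩ : ∃ H ∈ Dl, p.2.toFinset ⊆ H ∧ ¬ H ⊆ M := by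
              by_cases hFM : p.2.toFinset ⊆ M
              · by_contra hcon
                push_neg at hcon
                apply hnotP
                rw [hPriv, Finset.mem_filter]
                exact ⟨hFDl, hFM, fun H hH hFH => hcon H hH hFH⟩
              · exact ⟨p.2.toFinset, hFDl, subset_refl _, hFM⟩
            obtain ⟨G, hG, hHG, hGmax⟩ := exists_maximal_above Dl hH
            have hGM : ¬ G ⊆ M := fun hc => hHM (hHG.trans hc)
            have hGD' : G ∈ Dl' := by
              rw [hDl', Finset.mem_sdiff]
              refine ⟨hG, fun hGP => hGM (hPrivM G hGP).1⟩
            have hFG : p.2.toFinset ⊆ G := hFH.trans hHG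
            have hFeqG : p.2.toFinset = G := by
              by_contra hne
              exact hmax' G hGD' (lt_of_le_of_ne hFG hne)
            rw [hFeqG]
            exact hGmax
          exact maxword_clause Dl hc3.1 hmaxDl
        · obtain ⟨τ, hq1, hτnd, hτct, hq2M⟩ := hP1' q hq
          rw [hfq q τ hq1]
          have hfilsub : τ.filter (· ∈ q.2) <+ τ := filter_sublist
          have hfilct : (τ.filter (· ∈ q.2)).toFinset = q.2 := by
            ext x
            simp only [toFinset_filter, Finset.mem_filter, decide_eq_true_eq]
            constructor
            · exact fun h => h.2
            · intro h
              exact ⟨by rw [hτct]; exact hq2M h, h⟩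
          refine ⟨hfilsub, ⟨hfilsub.nodup hτnd, ?_⟩, ⟨hτnd, by rw [hτct]; exact hM⟩, ?_⟩
          · rw [hfilct]
            exact hdown M hM q.2 hq2M
          · apply maxword_clause Dl hτnd
            rw [hτct]
            exact hMmax
      -- ------------------- condition 2 -------------------
      · intro w hw hwDl
        by_cases hwP : w.toFinset ∈ Priv
        · -- private content : covered by the new intervals
          have hwM : w.toFinset ⊆ M := (hPrivM _ hwP).1
          have hgt : goodTup M 1 [w] := by
            refine ⟨rfl, by simpa using hw, ?_⟩
            simpa using hwM
          obtain ⟨q0, ⟨hq0, hq0c⟩, huniq⟩ := (hP1cov [w] hgt).1 ((hRqiff w).2 hwP)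
          refine ⟨f q0, ⟨Or.inr ⟨q0, hq0, rfl⟩, (hcoviff q0 hq0 w hw).1 hq0c⟩, ?_⟩
          rintro p ⟨hpm, hpc⟩
          rw [hpairs] at hpm
          rcases hpm with hp' | ⟨q1, hq1m, rfl⟩
          · exfalso
            obtain ⟨_, _, hc3, _⟩ := h1' p hp'
            have hwsub : w.toFinset ⊆ p.2.toFinset := fun x hx =>
              mem_toFinset.2 (hpc.2.subset (mem_toFinset.1 hx))
            have : w.toFinset ∈ Dl' := hdown' _ hc3.2 _ hwsub
            exact (Finset.mem_sdiff.1 (hDl' ▸ this)).2 hwP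
          · have hcov := (hcoviff q1 hq1m w hw).2 hpc
            rw [huniq q1 ⟨hq1m, hcov⟩]
        · -- non-private content : covered by the inductive partition
          have hwD' : w.toFinset ∈ Dl' := by
            rw [hDl', Finset.mem_sdiff]; exact ⟨hwDl, hwP⟩
          obtain ⟨p0, hp0, huniq⟩ := h2' w hw hwD'
          refine ⟨p0, ⟨Or.inl hp0.1, hp0.2⟩, ?_⟩
          rintro p ⟨hpm, hpc⟩
          rw [hpairs] at hpm
          rcases hpm with hp' | ⟨q1, hq1m, rfl⟩
          · exact huniq p ⟨hp', hpc⟩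
          · exfalso
            obtain ⟨τ, hq1, hτnd, hτct, hq2M⟩ := hP1' q1 hq1m
            have hwM : w.toFinset ⊆ M := by
              have : w <+ (f q1).2 := hpc.2
              rw [hfq q1 τ hq1] at this
              intro x hx
              rw [← hτct]
              exact mem_toFinset.2 (this.subset (mem_toFinset.1 hx))
            have hgt : goodTup M 1 [w] := by
              refine ⟨rfl, by simpa using hw, ?_⟩
              simpa using hwM
            have hcov := (hcoviff q1 hq1m w hw).2 hpc
            have hnR : ¬ Rq [U] [w] := fun hR => hwP ((hRqiff w).1 hR)
            exact (hP1cov [w] hgt).2 hnR q1 hq1m hcov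

end GammaPart



/-- The Boolean cell complex `Γ(Δ)` of injective words with content in a
finite simplicial complex `Δ` is partitionable: it admits a partition into
pairwise disjoint intervals `[σ_i, τ_i]` in the subword order such that each
`τ_i` is a maximal cell. -/
theorem gamma_partitionable {S : Type*} [DecidableEq S]
    (Δ : Set (Finset S)) (hfin : Δ.Finite)
    (hdown : ∀ σ ∈ Δ, ∀ τ ⊆ σ, τ ∈ Δ) :
    ∃ pairs : Set (List S × List S),
      (∀ p ∈ pairs, p.1.Sublist p.2 ∧
        (p.1.Nodup ∧ p.1.toFinset ∈ Δ) ∧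
        (p.2.Nodup ∧ p.2.toFinset ∈ Δ) ∧
        (∀ u : List S, u.Nodup → u.toFinset ∈ Δ → p.2.Sublist u → u = p.2)) ∧
      (∀ w : List S, w.Nodup → w.toFinset ∈ Δ →
        ∃! p : List S × List S, p ∈ pairs ∧ p.1.Sublist w ∧ w.Sublist p.2) := by
  classical
  have hdown' : ∀ σ ∈ hfin.toFinset, ∀ τ ⊆ σ, τ ∈ hfin.toFinset := by
    intro σ hσ τ hτσ
    rw [Set.Finite.mem_toFinset] at hσ ⊢
    exact hdown σ hσ τ hτσ
  obtain ⟨pairs, h1, h2⟩ := GammaPart.main_partition hfin.toFinset hdown'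
  refine ⟨pairs, ?_, ?_⟩
  · intro p hp
    obtain ⟨ha, hb, hc, hd⟩ := h1 p hp
    refine ⟨ha, ⟨hb.1, (Set.Finite.mem_toFinset hfin).1 hb.2⟩,
      ⟨hc.1, (Set.Finite.mem_toFinset hfin).1 hc.2⟩, ?_⟩
    intro u hu hum hsub
    exact hd u hu ((Set.Finite.mem_toFinset hfin).2 hum) hsub
  · intro w hw hwΔ
    exact h2 w hw ((Set.Finite.mem_toFinset hfin).2 hwΔ)
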